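/- Let X and Y be Polish, μ ∈ P(X), ν ∈ P(Y), and c : X × Y → [0,∞) continuous such that T_c(μ,ν) < ∞. For any optimal transport plan π and any two Kantorovich potentials f₁, f₂ ∈ S_c(μ,ν): (1) f₁ = f₂ μ-almost surely if and only if f₁ = f₂ everywhere on pr_X(supp π); (2) f₁^c = f₂^c ν-almost surely if and only if f₁^c = f₂^c everywhere on pr_Y(supp π); (3) f₁ = f₂ on pr_X(supp π) if and only if f₁^c = f₂^c on pr_Y(supp π). -/

import Mathlib

open MeasureTheory Filter Set Topology
open scoped ENNReal NNReal Manifold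

noncomputable section

/-- The topological support of a Borel measure: points all of whose open
neighborhoods have positive measure. -/
def msupport {X : Type*} [TopologicalSpace X] [MeasurableSpace X]
    (μ : Measure X) : Set X :=
  {x | ∀ U : Set X, IsOpen U → x ∈ U → 0 < μ U}

/-- `π` is a coupling (transport plan) between `μ` and `ν`. -/
def IsCoupling {X Y : Type*} [MeasurableSpace X] [MeasurableSpace Y]
    (π : Measure (X × Y)) (μ : Measure X) (ν : Measure Y) : Prop :=
  π.map Prod.fst = μ ∧ π.map Prod.snd = ν

/-- The optimal transport cost `T_c(μ, ν)`. -/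
def transportCost {X Y : Type*} [MeasurableSpace X] [MeasurableSpace Y]
    (c : X → Y → ℝ) (μ : Measure X) (ν : Measure Y) : ℝ≥0∞ :=
  ⨅ (π : Measure (X × Y)) (_ : IsCoupling π μ ν),
    ∫⁻ p, ENNReal.ofReal (c p.1 p.2) ∂π

/-- `π` is an optimal transport plan between `μ` and `ν` for the cost `c`. -/
def IsOptimalPlan {X Y : Type*} [MeasurableSpace X] [MeasurableSpace Y]
    (c : X → Y → ℝ) (μ : Measure X) (ν : Measure Y) (π : Measure (X × Y)) : Prop :=
  IsCoupling π μ ν ∧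
    ∫⁻ p, ENNReal.ofReal (c p.1 p.2) ∂π = transportCost c μ ν

/-- The `c`-transform of a function `f : X → ℝ ∪ {-∞}`, namely
`f^c(y) = inf_x (c(x,y) - f(x))`. -/
def cTransform {X Y : Type*} (c : X → Y → ℝ) (f : X → EReal) : Y → EReal :=
  fun y => ⨅ x, ((c x y : ℝ) : EReal) - f x

/-- The `c`-transform of a function `g : Y → ℝ ∪ {-∞}`, namely
`g^c(x) = inf_y (c(x,y) - g(y))`. -/
def cTransformY {X Y : Type*} (c : X → Y → ℝ) (g : Y → EReal) : X → EReal :=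
  fun x => ⨅ y, ((c x y : ℝ) : EReal) - g y

/-- `f : X → ℝ ∪ {-∞}` is `c`-concave on `X`: it is the `c`-transform of some
`g : Y → ℝ ∪ {-∞}` and is not identically `-∞`. -/
def CConcave {X Y : Type*} (c : X → Y → ℝ) (f : X → EReal) : Prop :=
  (∃ g : Y → EReal, (∀ y, g y ≠ ⊤) ∧ f = cTransformY c g) ∧
    (∀ x, f x ≠ ⊤) ∧ (∃ x, f x ≠ ⊥)

/-- The `c`-subdifferential `∂_c f = {(x,y) | f(x) + f^c(y) = c(x,y)}`. -/
def cSubdiff {X Y : Type*} (c : X → Y → ℝ) (f : X → EReal) : Set (X × Y) :=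
  {p | f p.1 + cTransform c f p.2 = ((c p.1 p.2 : ℝ) : EReal)}

/-- `f` is a (generalized) Kantorovich potential for `(c, μ, ν)`: it is
`c`-concave and satisfies `f ⊕ f^c = c` almost surely with respect to every
optimal transport plan (which, for `T_c(μ,ν) < ∞`, is equivalent to
`∫ (f ⊕ f^c) dπ = T_c(μ,ν)` for every optimal `π`, since `f ⊕ f^c ≤ c`). -/
def IsKantorovichPotential {X Y : Type*} [MeasurableSpace X] [MeasurableSpace Y]
    (c : X → Y → ℝ) (μ : Measure X) (ν : Measure Y) (f : X → EReal) : Prop :=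
  CConcave c f ∧
    ∀ π : Measure (X × Y), IsOptimalPlan c μ ν π →
      ∀ᵐ p ∂π, f p.1 + cTransform c f p.2 = ((c p.1 p.2 : ℝ) : EReal)

/-- The plan `π` induces regularity on `U` with respect to the compact set `K`. -/
def InducesRegularityOn {X Y : Type*} [TopologicalSpace X] [TopologicalSpace Y]
    [MeasurableSpace X] [MeasurableSpace Y]
    (π : Measure (X × Y)) (U : Set X) (K : Set Y) : Prop :=
  IsCompact K ∧
    (Prod.fst '' msupport π) ∩ U = Prod.fst '' (msupport π ∩ (U ×ˢ K))

/-- The plan `π` induces regularity at the point `x ∈ supp μ`: it induces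
regularity on some relatively open neighborhood `U ⊆ supp μ` of `x`. -/
def InducesRegularityAt {X Y : Type*} [TopologicalSpace X] [TopologicalSpace Y]
    [MeasurableSpace X] [MeasurableSpace Y]
    (π : Measure (X × Y)) (μ : Measure X) (x : X) : Prop :=
  ∃ U : Set X, x ∈ U ∧ (∃ V : Set X, IsOpen V ∧ U = V ∩ msupport μ) ∧
    ∃ K : Set Y, InducesRegularityOn π U K

/-- `F` is a decomposition of the set `S` into its connected components. -/
def IsComponentDecomp {X : Type*} [TopologicalSpace X] {ι : Type*}
    (S : Set X) (F : ι → Set X) : Prop :=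
  (⋃ i, F i) = S ∧ Pairwise (fun i j => Disjoint (F i) (F j)) ∧
    ∀ i, ∃ x ∈ S, F i = connectedComponentIn S x

/-- A transport plan `π` is degenerate (with respect to decompositions `F`, `G`
of the supports of `μ` and `ν` into connected components). -/
def IsDegenerate {X Y : Type*} [MeasurableSpace X] [MeasurableSpace Y] {ι κ : Type*}
    (F : ι → Set X) (G : κ → Set Y) (μ : Measure X) (ν : Measure Y)
    (π : Measure (X × Y)) : Prop :=
  ∃ (I' : Set ι) (J' : Set κ),
    0 < (∑' i : I', μ (F i.1)) ∧
    (∑' i : I', μ (F i.1)) = (∑' i : I', ∑' j : J', π (F i.1 ×ˢ G j.1)) ∧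
    (∑' i : I', ∑' j : J', π (F i.1 ×ˢ G j.1)) = (∑' j : J', ν (G j.1)) ∧
    (∑' j : J', ν (G j.1)) < 1

end


section AuxLemmas

open Filter

lemma ereal_real_of_add_eq {a b : EReal} {r : ℝ} (ha : a ≠ ⊤) (hb : b ≠ ⊤)
    (h : a + b = (r : EReal)) : ∃ p q : ℝ, a = (p:EReal) ∧ b = (q:EReal) ∧ p + q = r := by
  rcases eq_or_ne a ⊥ with h1 | h1
  · rw [h1, EReal.bot_add] at h; exact absurd h.symm (EReal.coe_ne_bot r)
  rcases eq_or_ne b ⊥ with h2 | h2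
  · rw [h2, EReal.add_bot] at h; exact absurd h.symm (EReal.coe_ne_bot r)
  refine ⟨a.toReal, b.toReal, (EReal.coe_toReal ha h1).symm, (EReal.coe_toReal hb h2).symm, ?_⟩
  rw [← EReal.coe_eq_coe_iff, EReal.coe_add, EReal.coe_toReal ha h1, EReal.coe_toReal hb h2]
  exact h

lemma inf_lt_eventually {Z : Type*} [TopologicalSpace Z] {ι : Type*}
    (φ : Z → ι → ℝ) (hφ : ∀ i, Continuous fun z => φ z i)
    (g : ι → EReal) (z : Z) (b : EReal)
    (hb : (⨅ i, ((φ z i : ℝ) : EReal) - g i) < b) :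
    ∀ᶠ z' in 𝓝 z, (⨅ i, ((φ z' i : ℝ) : EReal) - g i) < b := by
  obtain ⟨i, hi⟩ := iInf_lt_iff.mp hb
  have key : ∀ᶠ z' in 𝓝 z, ((φ z' i : ℝ) : EReal) - g i < b := by
    rcases eq_or_ne (g i) ⊥ with hg | hg
    · rw [hg, EReal.sub_bot (EReal.coe_ne_bot _)] at hi
      exact absurd hi (by simp)
    rcases eq_or_ne (g i) ⊤ with hg2 | hg2
    · filter_upwards with z'; rw [hg2, EReal.sub_top]; rw [hg2, EReal.sub_top] at hi; exact hi
    have hgr := EReal.coe_toReal hg2 hg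
    have hcont : Continuous fun z' => ((φ z' i : ℝ) : EReal) - g i := by
      have : (fun z' => ((φ z' i : ℝ) : EReal) - g i)
          = fun z' => (((φ z' i - (g i).toReal : ℝ)) : EReal) := by
        funext z'; rw [EReal.coe_sub, hgr]
      rw [this]
      exact continuous_coe_real_ereal.comp ((hφ i).sub continuous_const)
    exact hcont.continuousAt.eventually_mem (Iio_mem_nhds hi) |>.mono (fun _ h => h)
  filter_upwards [key] with z' h using lt_of_le_of_lt (iInf_le _ i) h

lemma isClosed_msupport {X : Type*} [TopologicalSpace X] [MeasurableSpace X]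
    (μ : Measure X) : IsClosed (msupport μ) := by
  rw [← isOpen_compl_iff]
  refine isOpen_iff_forall_mem_open.mpr fun x hx => ?_
  simp only [msupport, mem_compl_iff, mem_setOf_eq, not_forall] at hx
  obtain ⟨U, hU, hxU, hμU⟩ := hx
  refine ⟨U, fun y hy hall => ?_, hU, hxU⟩
  exact absurd (hall U hU hy) hμU

lemma measure_msupport_compl {Z : Type*} [TopologicalSpace Z] [SecondCountableTopology Z]
    [MeasurableSpace Z] (ρ : Measure Z) : ρ (msupport ρ)ᶜ = 0 := by
  set S : Set (Set Z) := {U ∈ TopologicalSpace.countableBasis Z | ρ U = 0} with hS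
  have hcb := TopologicalSpace.isBasis_countableBasis Z
  have heq : (msupport ρ)ᶜ = ⋃₀ S := by
    ext x
    simp only [mem_compl_iff, msupport, mem_setOf_eq, not_forall, mem_sUnion]
    constructor
    · rintro ⟨U, hU, hxU, hμU⟩
      obtain ⟨V, hV, hxV, hVU⟩ := hcb.exists_subset_of_mem_open hxU hU
      have hU0 : ρ U = 0 := by simpa [pos_iff_ne_zero] using hμU
      exact ⟨V, ⟨hV, le_antisymm ((measure_mono hVU).trans hU0.le) (zero_le)⟩, hxV⟩
    · rintro ⟨V, ⟨hV, hρV⟩, hxV⟩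
      exact ⟨V, hcb.isOpen hV, hxV, by simp [hρV]⟩
  rw [heq]
  refine (measure_sUnion_null_iff ?_).mpr fun s hs => hs.2
  exact (TopologicalSpace.countable_countableBasis Z).mono (sep_subset _ _)

lemma exists_mem_of_msupport {Z : Type*} [TopologicalSpace Z] [MeasurableSpace Z]
    {π : Measure Z} {z : Z} (hz : z ∈ msupport π) {P : Z → Prop} (hae : ∀ᵐ p ∂π, P p)
    {N : Set Z} (hN : N ∈ 𝓝 z) : ∃ p ∈ N, P p := by
  obtain ⟨O, hON, hO, hzO⟩ := mem_nhds_iff.mp hN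
  have hpos := hz O hO hzO
  by_contra hcon
  push_neg at hcon
  have hsub : O ⊆ {p | ¬ P p} := fun p hp => hcon p (hON hp)
  have h0 : π O = 0 :=
    le_antisymm ((measure_mono hsub).trans_eq (ae_iff.mp hae)) (zero_le)
  exact hpos.ne' h0

variable {X Y : Type*} [TopologicalSpace X] [TopologicalSpace Y]
  {c : X → Y → ℝ}

lemma cTransform_ne_top (c : X → Y → ℝ) {f : X → EReal} (hfb : ∃ x, f x ≠ ⊥) (y : Y) :
    cTransform c f y ≠ ⊤ := by
  obtain ⟨x₀, hx₀⟩ := hfb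
  have hle : cTransform c f y ≤ ((c x₀ y : ℝ) : EReal) - f x₀ := iInf_le _ x₀
  intro htop
  rw [htop, top_le_iff] at hle
  rcases eq_or_ne (f x₀) ⊤ with h | h
  · rw [h, EReal.sub_top] at hle; exact absurd hle (by simp)
  · rw [← EReal.coe_toReal h hx₀, ← EReal.coe_sub] at hle
    exact EReal.coe_ne_top _ hle

lemma add_cTransform_le (c : X → Y → ℝ) {f : X → EReal} (hft : ∀ x, f x ≠ ⊤)
    (hfb : ∃ x, f x ≠ ⊥) (x : X) (y : Y) :
    f x + cTransform c f y ≤ ((c x y : ℝ) : EReal) := by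
  rcases eq_or_ne (f x) ⊥ with h | h
  · rw [h, EReal.bot_add]; exact bot_le
  · have hfr := EReal.coe_toReal (hft x) h
    have h1 : cTransform c f y ≤ ((c x y : ℝ) : EReal) - f x := iInf_le _ x
    calc f x + cTransform c f y ≤ f x + (((c x y : ℝ) : EReal) - f x) :=
          add_le_add_right h1 _
      _ = ((c x y : ℝ) : EReal) := by
          rw [← hfr, ← EReal.coe_sub, ← EReal.coe_add]
          norm_num

lemma usc_cTransform (hccont : Continuous fun p : X × Y => c p.1 p.2)
    {f : X → EReal} (hft : ∀ x, f x ≠ ⊤) :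
    UpperSemicontinuous (cTransform c f) := by
  intro y b hb
  exact inf_lt_eventually (fun y x => c x y)
    (fun x => by exact hccont.comp (continuous_const.prodMk continuous_id)) f y b hb

lemma usc_cTransformY (hccont : Continuous fun p : X × Y => c p.1 p.2)
    {g : Y → EReal} :
    UpperSemicontinuous (cTransformY c g) := by
  intro x b hb
  exact inf_lt_eventually (fun x y => c x y)
    (fun y => by exact hccont.comp (continuous_id.prodMk continuous_const)) g x b hb

lemma measurable_ereal_eq {α : Type*} [MeasurableSpace α] {f g : α → EReal}
    (hf : Measurable f) (hg : Measurable g) : MeasurableSet {x | f x = g x} := by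
  have hd : IsClosed {p : EReal × EReal | p.1 = p.2} := isClosed_eq continuous_fst continuous_snd
  exact hd.measurableSet.preimage (hf.prodMk hg)

end AuxLemmas

section MainAux

variable {X Y : Type*}
    [TopologicalSpace X] [PolishSpace X] [MeasurableSpace X] [BorelSpace X]
    [TopologicalSpace Y] [PolishSpace Y] [MeasurableSpace Y] [BorelSpace Y]
    {c : X → Y → ℝ}

lemma support_subset_subdiff (hccont : Continuous fun p : X × Y => c p.1 p.2)
    (π : Measure (X × Y)) {f : X → EReal} (hcc : CConcave c f)
    (hae : ∀ᵐ p ∂π, f p.1 + cTransform c f p.2 = ((c p.1 p.2 : ℝ) : EReal)) :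
    msupport π ⊆ cSubdiff c f := by
  obtain ⟨⟨g, hg, hform⟩, hft, hfb⟩ := hcc
  rintro ⟨x, y⟩ hxy
  have hle : f x + cTransform c f y ≤ ((c x y : ℝ) : EReal) := add_cTransform_le c hft hfb x y
  by_contra hne
  have hlt : f x + cTransform c f y < ((c x y : ℝ) : EReal) := lt_of_le_of_ne hle hne
  have hfcy : cTransform c f y ≠ ⊤ := cTransform_ne_top c hfb y
  -- choose real bounds b₁ > f x, b₂ > f^c y with b₁ + b₂ < c x y
  obtain ⟨b₁, b₂, hb₁, hb₂, hbc⟩ :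
      ∃ b₁ b₂ : ℝ, f x < (b₁ : EReal) ∧ cTransform c f y < (b₂ : EReal) ∧ b₁ + b₂ < c x y := by
    rcases eq_or_ne (f x) ⊥ with h1 | h1
    · rcases eq_or_ne (cTransform c f y) ⊥ with h2 | h2
      · exact ⟨c x y / 2 - 1, c x y / 2 - 1, by rw [h1]; exact EReal.bot_lt_coe _,
          by rw [h2]; exact EReal.bot_lt_coe _, by linarith⟩
      · refine ⟨c x y - (cTransform c f y).toReal - 2, (cTransform c f y).toReal + 1, ?_, ?_, by linarith⟩
        · rw [h1]; exact EReal.bot_lt_coe _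
        · conv_lhs => rw [← EReal.coe_toReal hfcy h2]
          exact EReal.coe_lt_coe_iff.mpr (by linarith)
    · have hfr := EReal.coe_toReal (hft x) h1
      rcases eq_or_ne (cTransform c f y) ⊥ with h2 | h2
      · refine ⟨(f x).toReal + 1, c x y - (f x).toReal - 2, ?_, ?_, by linarith⟩
        · conv_lhs => rw [← hfr]
          exact EReal.coe_lt_coe_iff.mpr (by linarith)
        · rw [h2]; exact EReal.bot_lt_coe _
      · have hfcr := EReal.coe_toReal hfcy h2
        have hsum : (f x).toReal + (cTransform c f y).toReal < c x y := by
          rw [← EReal.coe_lt_coe_iff, EReal.coe_add, hfr, hfcr]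
          exact hlt
        set δ := (c x y - (f x).toReal - (cTransform c f y).toReal) / 3 with hδ
        have hδpos : 0 < δ := by rw [hδ]; linarith
        refine ⟨(f x).toReal + δ, (cTransform c f y).toReal + δ, ?_, ?_, by rw [hδ]; linarith⟩
        · conv_lhs => rw [← hfr]
          exact EReal.coe_lt_coe_iff.mpr (by linarith)
        · conv_lhs => rw [← hfcr]
          exact EReal.coe_lt_coe_iff.mpr (by linarith)
  -- eventual bounds
  have hU : ∀ᶠ x' in 𝓝 x, f x' < (b₁ : EReal) := by
    have := usc_cTransformY (g := g) hccont x (b₁ : EReal) (by rw [← hform]; exact hb₁)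
    rw [hform]; exact this
  have hV : ∀ᶠ y' in 𝓝 y, cTransform c f y' < (b₂ : EReal) :=
    usc_cTransform hccont hft y (b₂ : EReal) hb₂
  have hW : ∀ᶠ p : X × Y in 𝓝 (x, y), b₁ + b₂ < c p.1 p.2 :=
    hccont.continuousAt.eventually_mem (Ioi_mem_nhds hbc)
  have hN : ∀ᶠ p : X × Y in 𝓝 (x, y),
      f p.1 < (b₁ : EReal) ∧ cTransform c f p.2 < (b₂ : EReal) ∧ b₁ + b₂ < c p.1 p.2 :=
    (continuousAt_fst.eventually hU).and ((continuousAt_snd.eventually hV).and hW)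
  obtain ⟨p, hpN, hpeq⟩ := exists_mem_of_msupport hxy hae hN
  obtain ⟨hp1, hp2, hp3⟩ := hpN
  have : f p.1 + cTransform c f p.2 < ((c p.1 p.2 : ℝ) : EReal) := by
    calc f p.1 + cTransform c f p.2 < (b₁ : EReal) + (b₂ : EReal) := EReal.add_lt_add hp1 hp2
      _ = ((b₁ + b₂ : ℝ) : EReal) := (EReal.coe_add _ _).symm
      _ < ((c p.1 p.2 : ℝ) : EReal) := EReal.coe_lt_coe_iff.mpr hp3
  exact this.ne hpeq

lemma key_le (hccont : Continuous fun p : X × Y => c p.1 p.2)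
    (π : Measure (X × Y)) {f₁ f₂ : X → EReal}
    (h₁ : CConcave c f₁) (h₂ : CConcave c f₂)
    (hA : ∀ᵐ p ∂π, f₁ p.1 = f₂ p.1 ∧
      f₁ p.1 + cTransform c f₁ p.2 = ((c p.1 p.2 : ℝ) : EReal) ∧
      f₂ p.1 + cTransform c f₂ p.2 = ((c p.1 p.2 : ℝ) : EReal))
    {x : X} {y : Y} (hxy : (x, y) ∈ msupport π)
    (hs₁ : f₁ x + cTransform c f₁ y = ((c x y : ℝ) : EReal))
    (hs₂ : f₂ x + cTransform c f₂ y = ((c x y : ℝ) : EReal)) :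
    f₂ x ≤ f₁ x := by
  obtain ⟨⟨g₁, hg₁, hform₁⟩, h₁t, h₁b⟩ := h₁
  obtain ⟨⟨g₂, hg₂, hform₂⟩, h₂t, h₂b⟩ := h₂
  obtain ⟨a₁, b₁, ha₁, hb₁, hab₁⟩ :=
    ereal_real_of_add_eq (h₁t x) (cTransform_ne_top c h₁b y) hs₁
  obtain ⟨a₂, b₂, ha₂, hb₂, hab₂⟩ :=
    ereal_real_of_add_eq (h₂t x) (cTransform_ne_top c h₂b y) hs₂
  rw [ha₁, ha₂, EReal.coe_le_coe_iff]
  refine le_of_forall_pos_le_add fun ε hε => ?_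
  set δ := ε / 3 with hδdef
  have hδ : 0 < δ := by rw [hδdef]; linarith
  -- eventual bounds
  have hU : ∀ᶠ x' in 𝓝 x, f₁ x' < ((a₁ + δ : ℝ) : EReal) := by
    have hlt : f₁ x < ((a₁ + δ : ℝ) : EReal) := by
      rw [ha₁]; exact EReal.coe_lt_coe_iff.mpr (by linarith)
    have := usc_cTransformY (g := g₁) hccont x _ (by rw [← hform₁]; exact hlt)
    rw [hform₁]; exact this
  have hV : ∀ᶠ y' in 𝓝 y, cTransform c f₂ y' < ((b₂ + δ : ℝ) : EReal) := by
    refine usc_cTransform hccont h₂t y _ ?_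
    beta_reduce; rw [hb₂]; exact EReal.coe_lt_coe_iff.mpr (by linarith)
  have hW : ∀ᶠ p : X × Y in 𝓝 (x, y), c p.1 p.2 ∈ Ioo (c x y - δ) (c x y + δ) :=
    hccont.continuousAt.eventually_mem (Ioo_mem_nhds (by linarith) (by linarith))
  have hN : ∀ᶠ p : X × Y in 𝓝 (x, y),
      f₁ p.1 < ((a₁ + δ : ℝ) : EReal) ∧ cTransform c f₂ p.2 < ((b₂ + δ : ℝ) : EReal) ∧
        c p.1 p.2 ∈ Ioo (c x y - δ) (c x y + δ) :=
    (continuousAt_fst.eventually hU).and ((continuousAt_snd.eventually hV).and hW)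
  obtain ⟨p, ⟨hp1, hp2, hp3⟩, hpeq, hpeq1, hpeq2⟩ := exists_mem_of_msupport hxy hA hN
  obtain ⟨a₁', b₁', ha₁', hb₁', hab₁'⟩ :=
    ereal_real_of_add_eq (h₁t p.1) (cTransform_ne_top c h₁b p.2) hpeq1
  obtain ⟨a₂', b₂', ha₂', hb₂', hab₂'⟩ :=
    ereal_real_of_add_eq (h₂t p.1) (cTransform_ne_top c h₂b p.2) hpeq2
  have heq' : a₁' = a₂' := by
    rw [ha₁', ha₂'] at hpeq; exact EReal.coe_eq_coe_iff.mp hpeq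
  have hlt1 : a₁' < a₁ + δ := by
    rw [ha₁'] at hp1; exact EReal.coe_lt_coe_iff.mp hp1
  have hlt2 : b₂' < b₂ + δ := by
    rw [hb₂'] at hp2; exact EReal.coe_lt_coe_iff.mp hp2
  obtain ⟨hc1, hc2⟩ := hp3
  -- a₂ = c x y - b₂ ; b₂' = c p - a₂'
  have : a₂ ≤ a₁ + ε := by
    have h1 : a₂ = c x y - b₂ := by linarith
    have h2 : b₂' = c p.1 p.2 - a₂' := by linarith
    rw [hδdef] at hlt1 hlt2 hc1 hc2
    linarith
  exact this

end MainAux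

/-- Equivalent formulations of almost sure uniqueness of
Kantorovich potentials. -/
theorem stmt5 {X Y : Type*}
    [TopologicalSpace X] [PolishSpace X] [MeasurableSpace X] [BorelSpace X]
    [TopologicalSpace Y] [PolishSpace Y] [MeasurableSpace Y] [BorelSpace Y]
    (c : X → Y → ℝ) (hc0 : ∀ x y, 0 ≤ c x y)
    (hccont : Continuous fun p : X × Y => c p.1 p.2)
    (μ : Measure X) (ν : Measure Y) [IsProbabilityMeasure μ] [IsProbabilityMeasure ν]
    (hT : transportCost c μ ν < ⊤)
    (π : Measure (X × Y)) (hπ : IsOptimalPlan c μ ν π)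
    (f₁ f₂ : X → EReal)
    (hf₁ : IsKantorovichPotential c μ ν f₁)
    (hf₂ : IsKantorovichPotential c μ ν f₂) :
    ((∀ᵐ x ∂μ, f₁ x = f₂ x) ↔ ∀ x ∈ Prod.fst '' msupport π, f₁ x = f₂ x) ∧
    ((∀ᵐ y ∂ν, cTransform c f₁ y = cTransform c f₂ y) ↔
      ∀ y ∈ Prod.snd '' msupport π, cTransform c f₁ y = cTransform c f₂ y) ∧
    ((∀ x ∈ Prod.fst '' msupport π, f₁ x = f₂ x) ↔
      ∀ y ∈ Prod.snd '' msupport π, cTransform c f₁ y = cTransform c f₂ y) := by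
  have hμmap : π.map Prod.fst = μ := hπ.1.1
  have hνmap : π.map Prod.snd = ν := hπ.1.2
  have hsuppc : π (msupport π)ᶜ = 0 := measure_msupport_compl π
  have hae₁ := hf₁.2 π hπ
  have hae₂ := hf₂.2 π hπ
  have hsub₁ : msupport π ⊆ cSubdiff c f₁ := support_subset_subdiff hccont π hf₁.1 hae₁
  have hsub₂ : msupport π ⊆ cSubdiff c f₂ := support_subset_subdiff hccont π hf₂.1 hae₂
  obtain ⟨⟨g₁, hg₁, hform₁⟩, h₁t, h₁b⟩ := hf₁.1
  obtain ⟨⟨g₂, hg₂, hform₂⟩, h₂t, h₂b⟩ := hf₂.1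
  have husc₁ : UpperSemicontinuous f₁ := hform₁ ▸ usc_cTransformY hccont
  have husc₂ : UpperSemicontinuous f₂ := hform₂ ▸ usc_cTransformY hccont
  have hmf₁ : Measurable f₁ := husc₁.measurable
  have hmf₂ : Measurable f₂ := husc₂.measurable
  have hmc₁ : Measurable (cTransform c f₁) := (usc_cTransform hccont h₁t).measurable
  have hmc₂ : Measurable (cTransform c f₂) := (usc_cTransform hccont h₂t).measurable
  have hE : MeasurableSet {x | f₁ x = f₂ x} := measurable_ereal_eq hmf₁ hmf₂
  have hEc : MeasurableSet {y | cTransform c f₁ y = cTransform c f₂ y} :=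
    measurable_ereal_eq hmc₁ hmc₂
  -- (1), hard direction
  have h1fwd : (∀ᵐ x ∂μ, f₁ x = f₂ x) → ∀ x ∈ Prod.fst '' msupport π, f₁ x = f₂ x := by
    intro h
    rintro x ⟨⟨x0, y0⟩, hmem, rfl⟩
    have hπae : ∀ᵐ p ∂π, f₁ p.1 = f₂ p.1 := by
      have ht := Measure.tendsto_ae_map (f := Prod.fst) (μ := π) measurable_fst.aemeasurable
      rw [hμmap] at ht
      exact ht.eventually h
    have hA : ∀ᵐ p ∂π, f₁ p.1 = f₂ p.1 ∧
        f₁ p.1 + cTransform c f₁ p.2 = ((c p.1 p.2 : ℝ) : EReal) ∧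
        f₂ p.1 + cTransform c f₂ p.2 = ((c p.1 p.2 : ℝ) : EReal) := hπae.and (hae₁.and hae₂)
    have hA' : ∀ᵐ p ∂π, f₂ p.1 = f₁ p.1 ∧
        f₂ p.1 + cTransform c f₂ p.2 = ((c p.1 p.2 : ℝ) : EReal) ∧
        f₁ p.1 + cTransform c f₁ p.2 = ((c p.1 p.2 : ℝ) : EReal) :=
      hA.mono fun p ⟨h1, h2, h3⟩ => ⟨h1.symm, h3, h2⟩
    exact le_antisymm
      (key_le hccont π hf₂.1 hf₁.1 hA' hmem (hsub₂ hmem) (hsub₁ hmem))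
      (key_le hccont π hf₁.1 hf₂.1 hA hmem (hsub₁ hmem) (hsub₂ hmem))
  -- (1), easy direction
  have h1rev : (∀ x ∈ Prod.fst '' msupport π, f₁ x = f₂ x) → ∀ᵐ x ∂μ, f₁ x = f₂ x := by
    intro hpt
    rw [ae_iff, ← hμmap]
    rw [show {x | ¬ f₁ x = f₂ x} = {x | f₁ x = f₂ x}ᶜ from rfl,
      Measure.map_apply measurable_fst hE.compl]
    refine measure_mono_null ?_ hsuppc
    intro p hp hmem
    exact hp (hpt p.1 ⟨p, hmem, rfl⟩)
  -- (3), forward direction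
  have h3fwd : (∀ x ∈ Prod.fst '' msupport π, f₁ x = f₂ x) →
      ∀ y ∈ Prod.snd '' msupport π, cTransform c f₁ y = cTransform c f₂ y := by
    intro h
    rintro y ⟨⟨x0, y0⟩, hmem, rfl⟩
    obtain ⟨a₁, b₁, ha₁, hb₁, hab₁⟩ :=
      ereal_real_of_add_eq (h₁t x0) (cTransform_ne_top c h₁b y0) (hsub₁ hmem)
    obtain ⟨a₂, b₂, ha₂, hb₂, hab₂⟩ :=
      ereal_real_of_add_eq (h₂t x0) (cTransform_ne_top c h₂b y0) (hsub₂ hmem)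
    have heq : f₁ x0 = f₂ x0 := h x0 ⟨(x0, y0), hmem, rfl⟩
    have haeq : a₁ = a₂ := by
      rw [ha₁, ha₂] at heq; exact EReal.coe_eq_coe_iff.mp heq
    rw [hb₁, hb₂, EReal.coe_eq_coe_iff]
    linarith
  -- (3), backward direction
  have h3rev : (∀ y ∈ Prod.snd '' msupport π, cTransform c f₁ y = cTransform c f₂ y) →
      ∀ x ∈ Prod.fst '' msupport π, f₁ x = f₂ x := by
    intro h
    rintro x ⟨⟨x0, y0⟩, hmem, rfl⟩
    obtain ⟨a₁, b₁, ha₁, hb₁, hab₁⟩ :=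
      ereal_real_of_add_eq (h₁t x0) (cTransform_ne_top c h₁b y0) (hsub₁ hmem)
    obtain ⟨a₂, b₂, ha₂, hb₂, hab₂⟩ :=
      ereal_real_of_add_eq (h₂t x0) (cTransform_ne_top c h₂b y0) (hsub₂ hmem)
    have heq : cTransform c f₁ y0 = cTransform c f₂ y0 := h y0 ⟨(x0, y0), hmem, rfl⟩
    have hbeq : b₁ = b₂ := by
      rw [hb₁, hb₂] at heq; exact EReal.coe_eq_coe_iff.mp heq
    rw [ha₁, ha₂, EReal.coe_eq_coe_iff]
    linarith
  -- (2), easy direction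
  have h2rev : (∀ y ∈ Prod.snd '' msupport π, cTransform c f₁ y = cTransform c f₂ y) →
      ∀ᵐ y ∂ν, cTransform c f₁ y = cTransform c f₂ y := by
    intro hpt
    rw [ae_iff, ← hνmap]
    rw [show {y | ¬ cTransform c f₁ y = cTransform c f₂ y}
        = {y | cTransform c f₁ y = cTransform c f₂ y}ᶜ from rfl,
      Measure.map_apply measurable_snd hEc.compl]
    refine measure_mono_null ?_ hsuppc
    intro p hp hmem
    exact hp (hpt p.2 ⟨p, hmem, rfl⟩)
  -- (2), hard direction
  have h2fwd : (∀ᵐ y ∂ν, cTransform c f₁ y = cTransform c f₂ y) →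
      ∀ y ∈ Prod.snd '' msupport π, cTransform c f₁ y = cTransform c f₂ y := by
    intro h
    have hπν : ∀ᵐ p ∂π, cTransform c f₁ p.2 = cTransform c f₂ p.2 := by
      have ht := Measure.tendsto_ae_map (f := Prod.snd) (μ := π) measurable_snd.aemeasurable
      rw [hνmap] at ht
      exact ht.eventually h
    have hπ1 : ∀ᵐ p ∂π, f₁ p.1 = f₂ p.1 := by
      filter_upwards [hπν, hae₁, hae₂] with p hp hp1 hp2
      obtain ⟨a₁, b₁, ha₁, hb₁, hab₁⟩ :=
        ereal_real_of_add_eq (h₁t p.1) (cTransform_ne_top c h₁b p.2) hp1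
      obtain ⟨a₂, b₂, ha₂, hb₂, hab₂⟩ :=
        ereal_real_of_add_eq (h₂t p.1) (cTransform_ne_top c h₂b p.2) hp2
      have hbeq : b₁ = b₂ := by
        rw [hb₁, hb₂] at hp; exact EReal.coe_eq_coe_iff.mp hp
      rw [ha₁, ha₂, EReal.coe_eq_coe_iff]
      linarith
    have hμae : ∀ᵐ x ∂μ, f₁ x = f₂ x := by
      rw [← hμmap]
      exact (MeasureTheory.ae_map_iff measurable_fst.aemeasurable hE).mpr hπ1
    exact h3fwd (h1fwd hμae)
  exact ⟨⟨h1fwd, h1rev⟩, ⟨h2fwd, h2rev⟩, ⟨h3fwd, h3rev⟩⟩
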